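/- Let 𝕊^n be the round unit sphere of ℝ^{n+1} with its geodesic distance and Riemannian volume measure vol. Let S ⊆ 𝕊^n be an open convex subset (i.e. the cone {t·s : t ≥ 0, s ∈ S} is convex in ℝ^{n+1}), let x ∈ S and r > 0. Then vol(S ∩ B(x,r))/vol(S) ≥ vol(B(x,r))/vol(𝕊^n), where B(x,r) is the geodesic ball of center x and radius r in 𝕊^n. -/

import Mathlib

open Set MeasureTheory Metric

noncomputable section

/-- The Riemannian volume measure on the round sphere `𝕊^n` (normalization irrelevant
for ratios). -/
def sphereVolume (n : ℕ) : Measure (sphere (0 : EuclideanSpace ℝ (Fin (n + 1))) 1) :=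
  (volume : Measure (EuclideanSpace ℝ (Fin (n + 1)))).toSphere

/-- The geodesic ball of center `x` and radius `r` in the round sphere `𝕊^n`. -/
def geoBall {n : ℕ} (x : sphere (0 : EuclideanSpace ℝ (Fin (n + 1))) 1) (r : ℝ) :
    Set (sphere (0 : EuclideanSpace ℝ (Fin (n + 1))) 1) :=
  {y | Real.arccos
    (inner ℝ (x : EuclideanSpace ℝ (Fin (n + 1))) (y : EuclideanSpace ℝ (Fin (n + 1)))) ≤ r}

set_option maxHeartbeats 2000000

namespace BGaux

open Real
open scoped Pointwise ENNReal

abbrev Eu (N : ℕ) : Type := EuclideanSpace ℝ (Fin N)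
abbrev Sph (N : ℕ) := Metric.sphere (0 : Eu (N + 1)) 1

variable {N : ℕ}

/-- cone sector over a subset of the sphere -/
def sec (A : Set (Sph N)) : Set (Eu (N + 1)) :=
  Ioo (0 : ℝ) 1 • (Subtype.val '' A : Set (Eu (N + 1)))

lemma norm_coe (a : Sph N) : ‖(a : Eu (N + 1))‖ = 1 := mem_sphere_zero_iff_norm.1 a.2

lemma mem_sec {A : Set (Sph N)} {p : Eu (N + 1)} :
    p ∈ sec A ↔ ‖p‖ ∈ Ioo (0 : ℝ) 1 ∧ ‖p‖⁻¹ • p ∈ (Subtype.val '' A : Set (Eu (N + 1))) := by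
  constructor
  · rintro ⟨c, hc, q, hq, rfl⟩
    have hq1 : ‖q‖ = 1 := by
      rcases hq with ⟨a, _, rfl⟩; exact norm_coe a
    have hcpos : (0 : ℝ) < c := hc.1
    have hn : ‖c • q‖ = c := by
      rw [norm_smul, hq1, mul_one, Real.norm_eq_abs, abs_of_pos hcpos]
    refine ⟨by rw [hn]; exact hc, ?_⟩
    rw [hn, smul_smul, inv_mul_cancel₀ hcpos.ne', one_smul]
    exact hq
  · rintro ⟨h1, h2⟩
    exact ⟨‖p‖, h1, ‖p‖⁻¹ • p, h2, by show ‖p‖ • ‖p‖⁻¹ • p = p; rw [smul_smul, mul_inv_cancel₀ h1.1.ne', one_smul]⟩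

lemma sec_mono {A B : Set (Sph N)} (h : A ⊆ B) : sec A ⊆ sec B :=
  Set.smul_subset_smul_left (image_mono h)

lemma sec_inter (A B : Set (Sph N)) : sec (A ∩ B) = sec A ∩ sec B := by
  have himg : (Subtype.val '' (A ∩ B) : Set (Eu (N + 1))) = Subtype.val '' A ∩ Subtype.val '' B :=
    image_inter Subtype.coe_injective
  ext p
  simp only [mem_inter_iff, mem_sec, himg]
  tauto

lemma measurableSet_coe_image {A : Set (Sph N)} (hA : MeasurableSet A) :
    MeasurableSet (Subtype.val '' A : Set (Eu (N + 1))) :=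
  (MeasurableEmbedding.subtype_coe isClosed_sphere.measurableSet).measurableSet_image.2 hA

lemma measurableSet_sec {A : Set (Sph N)} (hA : MeasurableSet A) :
    MeasurableSet (sec A) := by
  have : sec A = {p : Eu (N + 1) | ‖p‖ ∈ Ioo (0 : ℝ) 1} ∩
      (fun p : Eu (N + 1) => ‖p‖⁻¹ • p) ⁻¹' (Subtype.val '' A) := by
    ext p; simpa using mem_sec
  rw [this]
  exact (measurable_norm measurableSet_Ioo).inter
    ((measurable_norm.inv.smul measurable_id) (measurableSet_coe_image hA))

lemma isOpen_sec {A : Set (Sph N)} (hA : IsOpen A) : IsOpen (sec A) := by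
  obtain ⟨U, hU, hUA⟩ := isOpen_induced_iff.1 hA
  have hset : sec A = {p : Eu (N + 1) | 0 < ‖p‖ ∧ ‖p‖ < 1} ∩
      (fun p : Eu (N + 1) => ‖p‖⁻¹ • p) ⁻¹' U := by
    ext p
    rw [mem_sec]
    constructor
    · rintro ⟨h1, h2⟩
      refine ⟨⟨h1.1, h1.2⟩, ?_⟩
      rw [← hUA] at h2
      show ‖p‖⁻¹ • p ∈ U
      exact image_preimage_subset _ _ h2
    · rintro ⟨⟨h0, h1⟩, hmem⟩
      refine ⟨⟨h0, h1⟩, ?_⟩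
      have hn : ‖‖p‖⁻¹ • p‖ = 1 := by
        rw [norm_smul, Real.norm_eq_abs, abs_of_pos (inv_pos.2 h0), inv_mul_cancel₀ h0.ne']
      exact ⟨⟨‖p‖⁻¹ • p, mem_sphere_zero_iff_norm.2 hn⟩, hUA ▸ hmem, rfl⟩
  rw [hset]
  refine ContinuousOn.isOpen_inter_preimage ?_ ?_ hU
  · exact ((continuous_norm.continuousOn.inv₀ fun p hp => hp.1.ne').smul continuousOn_id)
  · have : {p : Eu (N + 1) | 0 < ‖p‖ ∧ ‖p‖ < 1} = norm ⁻¹' Ioo (0 : ℝ) 1 := rfl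
    rw [this]
    exact isOpen_Ioo.preimage continuous_norm

lemma volume_sec_pos {A : Set (Sph N)} (hA : IsOpen A) (hne : A.Nonempty) :
    0 < volume (sec A) := by
  obtain ⟨a, ha⟩ := hne
  refine (isOpen_sec hA).measure_pos volume ⟨(2⁻¹ : ℝ) • (a : Eu (N + 1)), ?_⟩
  exact Set.smul_mem_smul (show (2⁻¹:ℝ) ∈ Ioo (0:ℝ) 1 by norm_num) (mem_image_of_mem _ ha)



-- ===== Part 2 : per-ray geometry =====

open scoped RealInnerProductSpace

variable {N : ℕ}

/-- the planar sector corresponding to `A` in the half-plane spanned by `x` and `z` -/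
def Msec (x : Sph N) (z : Eu (N + 1)) (A : Set (Sph N)) : Set (ℝ × Ioi (0 : ℝ)) :=
  {p | p.1 • (x : Eu (N + 1)) + (p.2 : ℝ) • z ∈ sec A}

lemma Msec_mono (x : Sph N) (z : Eu (N + 1)) {A B : Set (Sph N)} (h : A ⊆ B) :
    Msec x z A ⊆ Msec x z B := fun p hp => sec_mono h hp

lemma Msec_inter (x : Sph N) (z : Eu (N + 1)) (A B : Set (Sph N)) :
    Msec x z (A ∩ B) = Msec x z A ∩ Msec x z B := by
  ext p; simp [Msec, sec_inter]

variable {x : Sph N} {z : Eu (N + 1)}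

lemma norm_comb (hz1 : ‖z‖ = 1) (hz2 : ⟪(x : Eu (N + 1)), z⟫ = 0) (s u : ℝ) :
    ‖s • (x : Eu (N + 1)) + u • z‖ = Real.sqrt (s ^ 2 + u ^ 2) := by
  have h2 : ‖s • (x : Eu (N + 1)) + u • z‖ ^ 2 = s ^ 2 + u ^ 2 := by
    rw [norm_add_sq_real, real_inner_smul_left, real_inner_smul_right, hz2, norm_smul,
      norm_smul, hz1, norm_coe, Real.norm_eq_abs, Real.norm_eq_abs]
    simp [sq_abs]
  rw [← h2, Real.sqrt_sq (norm_nonneg _)]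

lemma mem_Msec_iff (hz1 : ‖z‖ = 1) (hz2 : ⟪(x : Eu (N + 1)), z⟫ = 0) {A : Set (Sph N)}
    {p : ℝ × Ioi (0 : ℝ)} :
    p ∈ Msec x z A ↔ p.1 ^ 2 + (p.2 : ℝ) ^ 2 < 1 ∧
      ((p.1 / Real.sqrt (p.1 ^ 2 + (p.2 : ℝ) ^ 2)) • (x : Eu (N + 1)) +
        ((p.2 : ℝ) / Real.sqrt (p.1 ^ 2 + (p.2 : ℝ) ^ 2)) • z) ∈
        (Subtype.val '' A : Set (Eu (N + 1))) := by
  set s := p.1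
  set u := (p.2 : ℝ) with hu
  have hupos : 0 < u := p.2.2
  have hsum : 0 < s ^ 2 + u ^ 2 := add_pos_of_nonneg_of_pos (sq_nonneg _) (pow_pos hupos 2)
  have hρ : 0 < Real.sqrt (s ^ 2 + u ^ 2) := Real.sqrt_pos.2 hsum
  have hv : (Real.sqrt (s ^ 2 + u ^ 2))⁻¹ • (s • (x : Eu (N + 1)) + u • z) =
      (s / Real.sqrt (s ^ 2 + u ^ 2)) • (x : Eu (N + 1)) +
      (u / Real.sqrt (s ^ 2 + u ^ 2)) • z := by
    rw [smul_add, smul_smul, smul_smul]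
    simp [div_eq_inv_mul]
  rw [Msec, mem_setOf_eq, mem_sec, norm_comb hz1 hz2, hv]
  have h1 : Real.sqrt (s ^ 2 + u ^ 2) ∈ Ioo (0 : ℝ) 1 ↔ s ^ 2 + u ^ 2 < 1 := by
    constructor
    · intro h
      have := h.2
      rwa [show (1 : ℝ) = Real.sqrt 1 by simp, Real.sqrt_lt_sqrt_iff hsum.le] at this
    · intro h
      exact ⟨hρ, by rw [show (1 : ℝ) = Real.sqrt 1 by simp,
        Real.sqrt_lt_sqrt_iff hsum.le]; exact h⟩
  rw [h1]

lemma unit_dir (hz1 : ‖z‖ = 1) (hz2 : ⟪(x : Eu (N + 1)), z⟫ = 0) {c d : ℝ}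
    (h : c ^ 2 + d ^ 2 = 1) : ‖c • (x : Eu (N + 1)) + d • z‖ = 1 := by
  rw [norm_comb hz1 hz2, h, Real.sqrt_one]

lemma Msec_univ (hz1 : ‖z‖ = 1) (hz2 : ⟪(x : Eu (N + 1)), z⟫ = 0) :
    Msec x z univ = {p : ℝ × Ioi (0 : ℝ) | p.1 ^ 2 + (p.2 : ℝ) ^ 2 < 1} := by
  ext p
  rw [mem_setOf_eq, mem_Msec_iff hz1 hz2]
  refine ⟨fun h => h.1, fun h => ⟨h, ?_⟩⟩
  have hsum : 0 < p.1 ^ 2 + (p.2 : ℝ) ^ 2 := add_pos_of_nonneg_of_pos (sq_nonneg _) (pow_pos p.2.2 2)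
  have hd : (p.1 / Real.sqrt (p.1 ^ 2 + (p.2 : ℝ) ^ 2)) ^ 2 +
      ((p.2 : ℝ) / Real.sqrt (p.1 ^ 2 + (p.2 : ℝ) ^ 2)) ^ 2 = 1 := by
    rw [div_pow, div_pow, Real.sq_sqrt hsum.le]
    field_simp
  have hn := unit_dir hz1 hz2 hd
  rw [image_univ, Subtype.range_coe]
  exact mem_sphere_zero_iff_norm.2 hn

lemma inner_dir (hz2 : ⟪(x : Eu (N + 1)), z⟫ = 0) (c d : ℝ) :
    ⟪(x : Eu (N + 1)), c • (x : Eu (N + 1)) + d • z⟫ = c := by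
  rw [inner_add_right, real_inner_smul_right, real_inner_smul_right, hz2,
    real_inner_self_eq_norm_sq, norm_coe]
  ring

lemma mem_image_geoBall {r : ℝ} {y : Eu (N + 1)} (hy : ‖y‖ = 1) :
    y ∈ (Subtype.val '' (geoBall x r) : Set (Eu (N + 1))) ↔
      Real.arccos ⟪(x : Eu (N + 1)), y⟫ ≤ r := by
  constructor
  · rintro ⟨Y, hY, rfl⟩
    exact hY
  · intro h
    exact ⟨⟨y, mem_sphere_zero_iff_norm.2 hy⟩, h, rfl⟩

lemma Msec_ball (hz1 : ‖z‖ = 1) (hz2 : ⟪(x : Eu (N + 1)), z⟫ = 0) (r : ℝ) :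
    Msec x z (geoBall x r) = {p : ℝ × Ioi (0 : ℝ) | p.1 ^ 2 + (p.2 : ℝ) ^ 2 < 1 ∧
      Real.arccos (p.1 / Real.sqrt (p.1 ^ 2 + (p.2 : ℝ) ^ 2)) ≤ r} := by
  ext p
  rw [mem_setOf_eq, mem_Msec_iff hz1 hz2]
  have hsum : 0 < p.1 ^ 2 + (p.2 : ℝ) ^ 2 := add_pos_of_nonneg_of_pos (sq_nonneg _) (pow_pos p.2.2 2)
  have hd : (p.1 / Real.sqrt (p.1 ^ 2 + (p.2 : ℝ) ^ 2)) ^ 2 +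
      ((p.2 : ℝ) / Real.sqrt (p.1 ^ 2 + (p.2 : ℝ) ^ 2)) ^ 2 = 1 := by
    rw [div_pow, div_pow, Real.sq_sqrt hsum.le]
    field_simp
  rw [mem_image_geoBall (unit_dir hz1 hz2 hd), inner_dir hz2]

-- ===== the convex cone =====

/-- the cone over `S`, as in the statement -/
def cone (S : Set (Sph N)) : Set (Eu (N + 1)) :=
  {p : Eu (N + 1) | ∃ t : ℝ, 0 ≤ t ∧ ∃ s ∈ S, p = t • (s : Eu (N + 1))}

lemma cone_smul_mem {S : Set (Sph N)} {t : ℝ} (ht : 0 ≤ t) {p : Eu (N + 1)}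
    (hp : p ∈ cone S) : t • p ∈ cone S := by
  obtain ⟨c, hc, q, hq, rfl⟩ := hp
  exact ⟨t * c, mul_nonneg ht hc, q, hq, smul_smul t c _⟩

lemma cone_add_mem {S : Set (Sph N)} (hconv : Convex ℝ (cone S)) {p q : Eu (N + 1)}
    (hp : p ∈ cone S) (hq : q ∈ cone S) : p + q ∈ cone S := by
  have h2 : (2 : ℝ) • ((1 / 2 : ℝ) • p + (1 / 2 : ℝ) • q) ∈ cone S :=
    cone_smul_mem (by norm_num)
      (hconv hp hq (by norm_num) (by norm_num) (by norm_num))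
  rw [smul_add, smul_smul, smul_smul] at h2
  norm_num at h2
  exact h2

lemma coe_mem_cone {S : Set (Sph N)} {s : Sph N} (hs : s ∈ S) : (s : Eu (N + 1)) ∈ cone S :=
  ⟨1, zero_le_one, s, hs, (one_smul _ _).symm⟩

lemma unit_mem_image_of_mem_cone {S : Set (Sph N)} {p : Eu (N + 1)} (hp : p ∈ cone S)
    (hpn : ‖p‖ = 1) : p ∈ (Subtype.val '' S : Set (Eu (N + 1))) := by
  obtain ⟨t, ht, q, hq, rfl⟩ := hp
  have : ‖t • (q : Eu (N + 1))‖ = t := by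
    rw [norm_smul, norm_coe, mul_one, Real.norm_eq_abs, abs_of_nonneg ht]
  rw [this] at hpn
  subst hpn
  rw [one_smul]
  exact mem_image_of_mem _ hq

lemma ray_step {S : Set (Sph N)} (hconv : Convex ℝ (cone S)) (hx : x ∈ S)
    (hz1 : ‖z‖ = 1) (hz2 : ⟪(x : Eu (N + 1)), z⟫ = 0)
    {c d c₀ d₀ : ℝ} (h1 : c ^ 2 + d ^ 2 = 1) (h2 : c₀ ^ 2 + d₀ ^ 2 = 1)
    (hd : 0 < d) (hd₀ : 0 < d₀) (hcc : c₀ ≤ c)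
    (hy₀ : c₀ • (x : Eu (N + 1)) + d₀ • z ∈ (Subtype.val '' S : Set (Eu (N + 1)))) :
    c • (x : Eu (N + 1)) + d • z ∈ (Subtype.val '' S : Set (Eu (N + 1))) := by
  have hkey : 0 ≤ c * d₀ - c₀ * d := by
    rcases le_or_gt c₀ 0 with h₀ | h₀
    · rcases le_or_gt 0 c with hc | hc
      · nlinarith
      · have habs : c ^ 2 ≤ c₀ ^ 2 := by nlinarith
        have hdd : d₀ ≤ d := by nlinarith
        nlinarith
    · have hc : 0 < c := lt_of_lt_of_le h₀ hcc
      have habs : c₀ ^ 2 ≤ c ^ 2 := by nlinarith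
      have hdd : d ≤ d₀ := by nlinarith
      nlinarith
  set a : ℝ := (c * d₀ - c₀ * d) / d₀ with ha_def
  set bb : ℝ := d / d₀ with hb_def
  have ha : 0 ≤ a := div_nonneg hkey hd₀.le
  have hb : 0 ≤ bb := div_nonneg hd.le hd₀.le
  have hy : c • (x : Eu (N + 1)) + d • z =
      a • (x : Eu (N + 1)) + bb • (c₀ • (x : Eu (N + 1)) + d₀ • z) := by
    have hac : a + bb * c₀ = c := by
      rw [ha_def, hb_def]
      field_simp
      ring
    have hbd : bb * d₀ = d := by
      rw [hb_def]
      field_simp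
    rw [smul_add, smul_smul, smul_smul, ← add_assoc, ← add_smul, hac, hbd]
  have hy₀c : c₀ • (x : Eu (N + 1)) + d₀ • z ∈ cone S := by
    obtain ⟨Y, hY, hYe⟩ := hy₀
    rw [← hYe]
    exact coe_mem_cone hY
  have hmem : c • (x : Eu (N + 1)) + d • z ∈ cone S := by
    rw [hy]
    exact cone_add_mem hconv (cone_smul_mem ha (coe_mem_cone hx)) (cone_smul_mem hb hy₀c)
  exact unit_mem_image_of_mem_cone hmem (unit_dir hz1 hz2 h1)

lemma arccos_antitone {s t : ℝ} (h : s ≤ t) : Real.arccos t ≤ Real.arccos s := by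
  rw [Real.arccos_eq_pi_div_two_sub_arcsin, Real.arccos_eq_pi_div_two_sub_arcsin]
  have := Real.monotone_arcsin h
  linarith

/-- The per-ray measure inequality. -/
lemma perray {S : Set (Sph N)} (hconv : Convex ℝ (cone S)) (hx : x ∈ S) (r : ℝ)
    (hz1 : ‖z‖ = 1) (hz2 : ⟪(x : Eu (N + 1)), z⟫ = 0)
    (μ2 : Measure (ℝ × Ioi (0 : ℝ))) :
    μ2 (Msec x z (geoBall x r)) * μ2 (Msec x z S) ≤
      μ2 (Msec x z (S ∩ geoBall x r)) * μ2 (Msec x z univ) := by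
  have hsubB : Msec x z (geoBall x r) ⊆ Msec x z univ := Msec_mono x z (subset_univ _)
  have hsubS : Msec x z S ⊆ Msec x z univ := Msec_mono x z (subset_univ _)
  rw [Msec_inter]
  by_cases hdi : ∀ p ∈ Msec x z S, p ∈ Msec x z (geoBall x r)
  · rw [inter_eq_left.2 hdi, mul_comm]
    exact mul_le_mul' le_rfl (measure_mono hsubB)
  · push_neg at hdi
    obtain ⟨p₀, hp₀S, hp₀B⟩ := hdi
    have hBS : Msec x z (geoBall x r) ⊆ Msec x z S := by
      intro q hq
      rw [Msec_ball hz1 hz2] at hq hp₀B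
      rw [mem_Msec_iff hz1 hz2] at hp₀S ⊢
      have hq1 := hq.1
      have hr₀ : ¬ Real.arccos (p₀.1 / Real.sqrt (p₀.1 ^ 2 + (p₀.2 : ℝ) ^ 2)) ≤ r := by
        intro hcon
        exact hp₀B ⟨hp₀S.1, hcon⟩
      -- c₀ ≤ c
      have hcc : p₀.1 / Real.sqrt (p₀.1 ^ 2 + (p₀.2 : ℝ) ^ 2) ≤
          q.1 / Real.sqrt (q.1 ^ 2 + (q.2 : ℝ) ^ 2) := by
        by_contra hlt
        push_neg at hlt
        exact hr₀ (le_trans (arccos_antitone hlt.le) hq.2)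
      have hsumq : 0 < q.1 ^ 2 + (q.2 : ℝ) ^ 2 := add_pos_of_nonneg_of_pos (sq_nonneg _) (pow_pos q.2.2 2)
      have hsum₀ : 0 < p₀.1 ^ 2 + (p₀.2 : ℝ) ^ 2 := add_pos_of_nonneg_of_pos (sq_nonneg _) (pow_pos p₀.2.2 2)
      have hdq : 0 < (q.2 : ℝ) / Real.sqrt (q.1 ^ 2 + (q.2 : ℝ) ^ 2) :=
        div_pos q.2.2 (Real.sqrt_pos.2 hsumq)
      have hd₀ : 0 < (p₀.2 : ℝ) / Real.sqrt (p₀.1 ^ 2 + (p₀.2 : ℝ) ^ 2) :=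
        div_pos p₀.2.2 (Real.sqrt_pos.2 hsum₀)
      have hq2 : (q.1 / Real.sqrt (q.1 ^ 2 + (q.2 : ℝ) ^ 2)) ^ 2 +
          ((q.2 : ℝ) / Real.sqrt (q.1 ^ 2 + (q.2 : ℝ) ^ 2)) ^ 2 = 1 := by
        rw [div_pow, div_pow, Real.sq_sqrt hsumq.le]; field_simp
      have hp2 : (p₀.1 / Real.sqrt (p₀.1 ^ 2 + (p₀.2 : ℝ) ^ 2)) ^ 2 +
          ((p₀.2 : ℝ) / Real.sqrt (p₀.1 ^ 2 + (p₀.2 : ℝ) ^ 2)) ^ 2 = 1 := by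
        rw [div_pow, div_pow, Real.sq_sqrt hsum₀.le]; field_simp
      exact ⟨hq1, ray_step hconv hx hz1 hz2 hq2 hp2 hdq hd₀ hcc hp₀S.2⟩
    rw [inter_eq_right.2 hBS]
    exact mul_le_mul' le_rfl (measure_mono hsubS)

-- ===== Part 3 : polar decomposition around x =====

lemma exists_polar {m : ℕ} (x : Sph (m + 1)) :
    ∃ ι : (Sph m) → Eu (m + 2),
      (∀ ω, ‖ι ω‖ = 1 ∧ ⟪(x : Eu (m + 2)), ι ω⟫ = 0) ∧
      ∀ A : Set (Sph (m + 1)), MeasurableSet A →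
        volume (sec A) =
          ∫⁻ ω, ((volume : Measure ℝ).prod (Measure.volumeIoiPow m)) (Msec x (ι ω) A)
            ∂((volume : Measure (Eu (m + 1))).toSphere) := by
  classical
  have hcard : Module.finrank ℝ (Eu (m + 2)) = Fintype.card (Fin (m + 2)) := by
    simp [finrank_euclideanSpace_fin]
  have horth : Orthonormal ℝ (({0} : Set (Fin (m + 2))).restrict
      (fun _ : Fin (m + 2) => (x : Eu (m + 2)))) := by
    refine ⟨fun i => norm_coe x, fun i j hij => absurd (Subtype.ext ?_) hij⟩
    rw [mem_singleton_iff.1 i.2, mem_singleton_iff.1 j.2]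
  obtain ⟨b, hb⟩ := horth.exists_orthonormalBasis_extension_of_card_eq hcard
  have hb0 : b 0 = (x : Eu (m + 2)) := hb 0 (mem_singleton 0)
  set ι' : Eu (m + 1) → Eu (m + 2) := fun w => ∑ j : Fin (m + 1), w j • b j.succ with hι'def
  have horth' : Orthonormal ℝ (fun j : Fin (m + 1) => b j.succ) :=
    b.orthonormal.comp _ (Fin.succ_injective _)
  have hinner0 : ∀ w : Eu (m + 1), ⟪(x : Eu (m + 2)), ι' w⟫ = 0 := by
    intro w
    rw [← hb0]
    simp only [hι'def, inner_sum, real_inner_smul_right]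
    refine Finset.sum_eq_zero fun j _ => ?_
    rw [b.orthonormal.2 (show (0 : Fin (m + 2)) ≠ j.succ from (Fin.succ_ne_zero j).symm),
      mul_zero]
  have hnorm : ∀ w : Eu (m + 1), ‖w‖ = 1 → ‖ι' w‖ = 1 := by
    intro w hw
    have h1 : ⟪ι' w, ι' w⟫ = ∑ j, w j * w j := by
      simpa using horth'.inner_sum w w Finset.univ
    have h2 : ‖w‖ ^ 2 = ∑ j, w j * w j := by
      rw [EuclideanSpace.norm_eq, Real.sq_sqrt (Finset.sum_nonneg fun j _ => sq_nonneg _)]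
      simp only [Real.norm_eq_abs, sq_abs, sq, abs_mul_abs_self]
    have h3 : ‖ι' w‖ ^ 2 = 1 := by
      rw [← real_inner_self_eq_norm_sq, h1, ← h2, hw]; norm_num
    nlinarith [norm_nonneg (ι' w)]
  have hsmul : ∀ (t : ℝ) (w : Eu (m + 1)), ι' (t • w) = t • ι' w := by
    intro t w
    simp only [hι'def, Finset.smul_sum, PiLp.smul_apply, smul_eq_mul, smul_smul]
  have hcont : Continuous ι' := by
    refine continuous_finset_sum _ fun j _ => ?_
    exact (continuous_apply j).comp (PiLp.continuous_ofLp 2 _) |>.smul continuous_const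
  -- measurable equivalence to ℝ × Eu (m+1)
  set Θ : Eu (m + 2) ≃ᵐ ℝ × Eu (m + 1) :=
    (b.measurableEquiv.trans ((MeasurableEquiv.toLp 2 (Fin (m + 2) → ℝ)).symm)).trans
      ((MeasurableEquiv.piFinSuccAbove (fun _ : Fin (m + 2) => ℝ) 0).trans
        ((MeasurableEquiv.refl ℝ).prodCongr ((MeasurableEquiv.toLp 2 (Fin (m + 1) → ℝ)).symm).symm))
    with hΘdef
  have hΘ : MeasurePreserving Θ volume
      ((volume : Measure ℝ).prod (volume : Measure (Eu (m + 1)))) := by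
    rw [← Measure.volume_eq_prod]
    have h4 : MeasurePreserving
        ((MeasurableEquiv.refl ℝ).prodCongr
          ((MeasurableEquiv.toLp 2 (Fin (m + 1) → ℝ)).symm).symm) volume volume := by
      rw [Measure.volume_eq_prod (α := ℝ), Measure.volume_eq_prod (α := ℝ)]
      exact (MeasurePreserving.id volume).prod
        ((EuclideanSpace.volume_preserving_symm_measurableEquiv_toLp (Fin (m + 1))).symm _)
    exact h4.comp ((volume_preserving_piFinSuccAbove (fun _ : Fin (m + 2) => ℝ) 0).comp
      ((EuclideanSpace.volume_preserving_symm_measurableEquiv_toLp (Fin (m + 2))).comp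
        b.measurePreserving_measurableEquiv))
  have hfwd : ∀ (s : ℝ) (w : Eu (m + 1)),
      Θ (s • (x : Eu (m + 2)) + ι' w) = (s, w) := by
    intro s w
    have h0 : b.repr (s • (x : Eu (m + 2)) + ι' w) 0 = s := by
      rw [OrthonormalBasis.repr_apply_apply, hb0, inner_add_right, real_inner_smul_right,
        hinner0, real_inner_self_eq_norm_sq, norm_coe]
      ring
    have hsucc : ∀ j : Fin (m + 1), b.repr (s • (x : Eu (m + 2)) + ι' w) j.succ = w j := by
      intro j
      have hzx : ⟪b j.succ, (x : Eu (m + 2))⟫ = 0 := by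
        rw [← hb0]; exact b.orthonormal.2 (Fin.succ_ne_zero j)
      have hwj : ⟪b j.succ, ι' w⟫ = w j := by
        simpa using horth'.inner_right_fintype w j
      rw [OrthonormalBasis.repr_apply_apply, inner_add_right, real_inner_smul_right, hzx,
        hwj, mul_zero, zero_add]
    refine Prod.ext ?_ ?_
    · exact h0
    · refine (WithLp.ext_iff 2).2 (funext fun j => ?_)
      show b.repr (s • (x : Eu (m + 2)) + ι' w) ((0 : Fin (m + 2)).succAbove j) = w j
      rw [Fin.zero_succAbove]
      exact hsucc j
  have hΘsymm : ∀ (s : ℝ) (w : Eu (m + 1)),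
      Θ.symm (s, w) = s • (x : Eu (m + 2)) + ι' w := by
    intro s w
    rw [← hfwd s w, MeasurableEquiv.symm_apply_apply]
  refine ⟨fun ω => ι' (ω : Eu (m + 1)), fun ω => ⟨hnorm _ (norm_coe ω), hinner0 _⟩, ?_⟩
  intro A hA
  have hsec : MeasurableSet (sec A) := measurableSet_sec hA
  set ν := Measure.volumeIoiPow m with hνdef
  set σF := (volume : Measure (Eu (m + 1))).toSphere with hσdef
  have hdim : Module.finrank ℝ (Eu (m + 1)) - 1 = m := by
    simp [finrank_euclideanSpace_fin]
  have hpolar : MeasurePreserving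
      (homeomorphUnitSphereProd (Eu (m + 1))).toMeasurableEquiv
      (Measure.comap Subtype.val (volume : Measure (Eu (m + 1)))) (σF.prod ν) := by
    have h := (volume : Measure (Eu (m + 1))).measurePreserving_homeomorphUnitSphereProd
    rw [hdim] at h
    exact h
  set eS := (homeomorphUnitSphereProd (Eu (m + 1))).toMeasurableEquiv with heSdef
  have hG : MeasurableSet (Θ.symm ⁻¹' sec A) := Θ.symm.measurable hsec
  have hMmeas : ∀ z : Eu (m + 2), MeasurableSet (Msec x z A) := by
    intro z
    have : Msec x z A =
        (fun p : ℝ × Ioi (0 : ℝ) => p.1 • (x : Eu (m + 2)) + (p.2 : ℝ) • z) ⁻¹' sec A := rfl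
    rw [this]
    exact ((measurable_fst.smul measurable_const).add
      ((measurable_subtype_coe.comp measurable_snd).smul measurable_const)) hsec
  have stepC : ∀ s : ℝ, (volume : Measure (Eu (m + 1))) (Prod.mk s ⁻¹' (Θ.symm ⁻¹' sec A)) =
      ∫⁻ ω : Sph m, ν {u : Ioi (0 : ℝ) | (s, u) ∈ Msec x (ι' (ω : Eu (m + 1))) A} ∂σF := by
    intro s
    set Gs := Prod.mk s ⁻¹' (Θ.symm ⁻¹' sec A) with hGsdef
    have hGsm : MeasurableSet Gs := measurable_prodMk_left hG
    have h1 : (volume : Measure (Eu (m + 1))) Gs = volume (Gs \ {0}) :=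
      (measure_diff_null (measure_singleton 0)).symm
    have h2 : volume (Gs \ {0}) =
        Measure.comap Subtype.val (volume : Measure (Eu (m + 1)))
          (Subtype.val ⁻¹' Gs : Set ({(0 : Eu (m + 1))}ᶜ : Set (Eu (m + 1)))) := by
      rw [comap_subtype_coe_apply (measurableSet_singleton (0 : Eu (m + 1))).compl,
        Subtype.image_preimage_coe, diff_eq, inter_comm]
    have h3 : Measure.comap Subtype.val (volume : Measure (Eu (m + 1)))
          (Subtype.val ⁻¹' Gs : Set ({(0 : Eu (m + 1))}ᶜ : Set (Eu (m + 1)))) =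
        (σF.prod ν) (eS.symm ⁻¹' (Subtype.val ⁻¹' Gs)) := by
      rw [(hpolar.symm eS).measure_preimage
        ((measurable_subtype_coe hGsm).nullMeasurableSet)]
    have h4 : eS.symm ⁻¹' (Subtype.val ⁻¹' Gs) =
        {q : Sph m × Ioi (0 : ℝ) | ((q.2 : ℝ) • (q.1 : Eu (m + 1))) ∈ Gs} := by
      ext q
      simp only [mem_preimage, mem_setOf_eq]
      constructor
      · intro h
        have : (Subtype.val (eS.symm q) : Eu (m + 1)) = (q.2 : ℝ) • (q.1 : Eu (m + 1)) := by
          rw [heSdef]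
          exact homeomorphUnitSphereProd_symm_apply_coe (Eu (m + 1)) q
        rwa [this] at h
      · intro h
        have : (Subtype.val (eS.symm q) : Eu (m + 1)) = (q.2 : ℝ) • (q.1 : Eu (m + 1)) := by
          rw [heSdef]
          exact homeomorphUnitSphereProd_symm_apply_coe (Eu (m + 1)) q
        rwa [this]
    have h5 : MeasurableSet {q : Sph m × Ioi (0 : ℝ) |
        ((q.2 : ℝ) • (q.1 : Eu (m + 1))) ∈ Gs} := by
      rw [← h4]
      exact eS.symm.measurable (measurable_subtype_coe hGsm)
    have h6 : (σF.prod ν) {q : Sph m × Ioi (0 : ℝ) | ((q.2 : ℝ) • (q.1 : Eu (m + 1))) ∈ Gs} =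
        ∫⁻ ω : Sph m, ν {u : Ioi (0 : ℝ) | ((u : ℝ) • (ω : Eu (m + 1))) ∈ Gs} ∂σF :=
      Measure.prod_apply h5
    have h7 : ∀ ω : Sph m, {u : Ioi (0 : ℝ) | ((u : ℝ) • (ω : Eu (m + 1))) ∈ Gs} =
        {u : Ioi (0 : ℝ) | (s, u) ∈ Msec x (ι' (ω : Eu (m + 1))) A} := by
      intro ω
      ext u
      simp only [mem_setOf_eq, hGsdef, mem_preimage]
      rw [hΘsymm, hsmul]
      rfl
    rw [h1, h2, h3, h4, h6]
    exact lintegral_congr fun ω => by rw [h7]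
  -- assemble with Fubini
  have hNN : MeasurableSet {q : (ℝ × Sph m) × Ioi (0 : ℝ) |
      (q.1.1, q.2) ∈ Msec x (ι' ((q.1.2 : Eu (m + 1)))) A} := by
    have : {q : (ℝ × Sph m) × Ioi (0 : ℝ) |
        (q.1.1, q.2) ∈ Msec x (ι' ((q.1.2 : Eu (m + 1)))) A} =
        (fun q : (ℝ × Sph m) × Ioi (0 : ℝ) =>
          q.1.1 • (x : Eu (m + 2)) + (q.2 : ℝ) • ι' ((q.1.2 : Eu (m + 1)))) ⁻¹' sec A := rfl
    rw [this]
    refine Measurable.add ?_ ?_ hsec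
    · exact (measurable_fst.fst).smul measurable_const
    · exact (measurable_subtype_coe.comp measurable_snd).smul
        (hcont.measurable.comp (measurable_subtype_coe.comp (measurable_snd.comp measurable_fst)))
  have hswap : ∫⁻ s : ℝ, ∫⁻ ω : Sph m,
        ν {u : Ioi (0 : ℝ) | (s, u) ∈ Msec x (ι' (ω : Eu (m + 1))) A} ∂σF =
      ∫⁻ ω : Sph m, ∫⁻ s : ℝ,
        ν {u : Ioi (0 : ℝ) | (s, u) ∈ Msec x (ι' (ω : Eu (m + 1))) A} ∂(volume : Measure ℝ)
        ∂σF := by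
    refine lintegral_lintegral_swap ?_
    exact (measurable_measure_prodMk_left hNN).aemeasurable
  calc volume (sec A) = ((volume : Measure ℝ).prod volume) (Θ.symm ⁻¹' sec A) :=
        ((hΘ.symm Θ).measure_preimage hsec.nullMeasurableSet).symm
    _ = ∫⁻ s : ℝ, (volume : Measure (Eu (m + 1))) (Prod.mk s ⁻¹' (Θ.symm ⁻¹' sec A)) :=
        Measure.prod_apply hG
    _ = ∫⁻ s : ℝ, ∫⁻ ω : Sph m,
          ν {u : Ioi (0 : ℝ) | (s, u) ∈ Msec x (ι' (ω : Eu (m + 1))) A} ∂σF :=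
        lintegral_congr fun s => stepC s
    _ = ∫⁻ ω : Sph m, ∫⁻ s : ℝ,
          ν {u : Ioi (0 : ℝ) | (s, u) ∈ Msec x (ι' (ω : Eu (m + 1))) A}
          ∂(volume : Measure ℝ) ∂σF := hswap
    _ = ∫⁻ ω : Sph m, ((volume : Measure ℝ).prod ν) (Msec x (ι' (ω : Eu (m + 1))) A) ∂σF :=
        lintegral_congr fun ω => (Measure.prod_apply (hMmeas _)).symm


-- ===== Part 4 : assembly =====

lemma sphereVolume_eq {N : ℕ} (A : Set (Sph N)) (hA : MeasurableSet A) :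
    sphereVolume N A = (N + 1 : ℕ) * volume (sec A) := by
  rw [sphereVolume, Measure.toSphere_apply' _ hA, finrank_euclideanSpace_fin]
  rfl

lemma tau_ne_top (k : ℕ) :
    ((volume : Measure ℝ).prod (Measure.volumeIoiPow k))
      {p : ℝ × Ioi (0 : ℝ) | p.1 ^ 2 + (p.2 : ℝ) ^ 2 < 1} ≠ ⊤ := by
  have hsub : {p : ℝ × Ioi (0 : ℝ) | p.1 ^ 2 + (p.2 : ℝ) ^ 2 < 1} ⊆
      (Ioo (-1 : ℝ) 1) ×ˢ (Iio (⟨1, mem_Ioi.2 one_pos⟩ : Ioi (0 : ℝ))) := by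
    rintro ⟨s, u⟩ h
    simp only [mem_setOf_eq] at h
    have hu : 0 < (u : ℝ) := u.2
    constructor
    · constructor <;> nlinarith
    · show u < ⟨1, mem_Ioi.2 one_pos⟩
      have : (u : ℝ) < 1 := by nlinarith
      exact this
  refine ne_of_lt (lt_of_le_of_lt (measure_mono hsub) ?_)
  rw [Measure.prod_prod, Real.volume_Ioo, Measure.volumeIoiPow_apply_Iio]
  exact ENNReal.mul_lt_top ENNReal.ofReal_lt_top ENNReal.ofReal_lt_top

lemma measurableSet_geoBall {N : ℕ} (x : Sph N) (r : ℝ) :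
    MeasurableSet (geoBall x r) := by
  have : geoBall x r = (fun y : Sph N =>
      Real.arccos (inner ℝ (x : Eu (N + 1)) (y : Eu (N + 1)))) ⁻¹' (Iic r) := rfl
  rw [this]
  refine IsClosed.measurableSet (IsClosed.preimage ?_ isClosed_Iic)
  exact Real.continuous_arccos.comp (Continuous.inner continuous_const continuous_subtype_val)

lemma self_mem_geoBall {N : ℕ} (x : Sph N) {r : ℝ} (hr : 0 < r) : x ∈ geoBall x r := by
  show Real.arccos (inner ℝ (x : Eu (N + 1)) (x : Eu (N + 1))) ≤ r
  rw [real_inner_self_eq_norm_sq, norm_coe]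
  norm_num [Real.arccos_one]
  exact hr.le

/-- the key product inequality, positive-dimensional case -/
lemma key_succ {m : ℕ} (S : Set (Sph (m + 1))) (hS_open : IsOpen S)
    (hS_conv : Convex ℝ (cone S)) (x : Sph (m + 1)) (hx : x ∈ S) (r : ℝ) :
    sphereVolume (m + 1) (geoBall x r) * sphereVolume (m + 1) S ≤
      sphereVolume (m + 1) (S ∩ geoBall x r) * sphereVolume (m + 1) univ := by
  classical
  obtain ⟨ι, hι, hKEY⟩ := exists_polar x
  set μ2 := (volume : Measure ℝ).prod (Measure.volumeIoiPow m) with hμ2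
  set σF := (volume : Measure (Eu (m + 1))).toSphere with hσF
  set τ : ℝ≥0∞ := μ2 {p : ℝ × Ioi (0 : ℝ) | p.1 ^ 2 + (p.2 : ℝ) ^ 2 < 1} with hτ
  set β : ℝ≥0∞ := μ2 {p : ℝ × Ioi (0 : ℝ) | p.1 ^ 2 + (p.2 : ℝ) ^ 2 < 1 ∧
    Real.arccos (p.1 / Real.sqrt (p.1 ^ 2 + (p.2 : ℝ) ^ 2)) ≤ r} with hβ
  have hSmeas : MeasurableSet S := hS_open.measurableSet
  have hBmeas : MeasurableSet (geoBall x r) := measurableSet_geoBall x r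
  have hSBmeas : MeasurableSet (S ∩ geoBall x r) := hSmeas.inter hBmeas
  have hτtop : τ ≠ ⊤ := tau_ne_top m
  have hβτ : β ≤ τ := measure_mono fun p hp => hp.1
  have hβtop : β ≠ ⊤ := ne_top_of_le_ne_top hτtop hβτ
  have hτω : ∀ ω : Sph m, μ2 (Msec x (ι ω) univ) = τ := fun ω => by
    rw [Msec_univ (hι ω).1 (hι ω).2]
  have hβω : ∀ ω : Sph m, μ2 (Msec x (ι ω) (geoBall x r)) = β := fun ω => by
    rw [Msec_ball (hι ω).1 (hι ω).2]
  have hperray : ∀ ω : Sph m, β * μ2 (Msec x (ι ω) S) ≤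
      τ * μ2 (Msec x (ι ω) (S ∩ geoBall x r)) := by
    intro ω
    rw [← hβω ω, ← hτω ω]
    exact le_trans (perray hS_conv hx r (hι ω).1 (hι ω).2 μ2)
      (le_of_eq (mul_comm _ _))
  have ha : volume (sec (geoBall x r)) = β * σF univ := by
    rw [hKEY _ hBmeas]
    rw [lintegral_congr hβω, lintegral_const]
  have hbu : volume (sec (univ : Set (Sph (m + 1)))) = τ * σF univ := by
    rw [hKEY _ MeasurableSet.univ]
    rw [lintegral_congr hτω, lintegral_const]
  have hprod : volume (sec (geoBall x r)) * volume (sec S) ≤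
      volume (sec (S ∩ geoBall x r)) * volume (sec (univ : Set (Sph (m + 1)))) := by
    rw [ha, hbu, hKEY _ hSmeas, hKEY _ hSBmeas]
    calc β * σF univ * ∫⁻ ω, μ2 (Msec x (ι ω) S) ∂σF
        = σF univ * (β * ∫⁻ ω, μ2 (Msec x (ι ω) S) ∂σF) := by ring
      _ = σF univ * ∫⁻ ω, β * μ2 (Msec x (ι ω) S) ∂σF := by
          rw [lintegral_const_mul' β _ hβtop]
      _ ≤ σF univ * ∫⁻ ω, τ * μ2 (Msec x (ι ω) (S ∩ geoBall x r)) ∂σF :=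
          mul_le_mul' le_rfl (lintegral_mono hperray)
      _ = σF univ * (τ * ∫⁻ ω, μ2 (Msec x (ι ω) (S ∩ geoBall x r)) ∂σF) := by
          rw [lintegral_const_mul' τ _ hτtop]
      _ = (∫⁻ ω, μ2 (Msec x (ι ω) (S ∩ geoBall x r)) ∂σF) * (τ * σF univ) := by ring
  rw [sphereVolume_eq _ hBmeas, sphereVolume_eq _ hSmeas, sphereVolume_eq _ hSBmeas,
    sphereVolume_eq _ MeasurableSet.univ]
  rw [mul_mul_mul_comm]
  rw [mul_mul_mul_comm ((m + 1 + 1 : ℕ) : ℝ≥0∞) (volume (sec (S ∩ geoBall x r)))]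
  exact mul_le_mul' le_rfl hprod

/-- the key product inequality, zero-dimensional case -/
lemma key_zero (S : Set (Sph 0)) (x : Sph 0) (hx : x ∈ S) {r : ℝ} (hr : 0 < r) :
    sphereVolume 0 (geoBall x r) * sphereVolume 0 S ≤
      sphereVolume 0 (S ∩ geoBall x r) * sphereVolume 0 univ := by
  classical
  set xneg : Sph 0 := ⟨-(x : Eu 1), by
    simp [mem_sphere_zero_iff_norm, norm_neg, norm_coe]⟩ with hxneg
  have hclass : ∀ y : Sph 0, y = x ∨ y = xneg := by
    intro y
    have hy : |(y : Eu 1) 0| = 1 := by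
      have := norm_coe y
      rw [EuclideanSpace.norm_eq] at this
      simpa [Fin.sum_univ_one, Real.sqrt_sq_eq_abs] using this
    have hx1 : |(x : Eu 1) 0| = 1 := by
      have := norm_coe x
      rw [EuclideanSpace.norm_eq] at this
      simpa [Fin.sum_univ_one, Real.sqrt_sq_eq_abs] using this
    have := abs_eq_abs.1 (hy.trans hx1.symm)
    rcases this with h | h
    · left
      refine Subtype.ext ((WithLp.ext_iff 2).2 (funext fun i => ?_))
      have hi : i = 0 := Fin.ext (Nat.lt_one_iff.1 i.isLt)
      rw [hi]; exact h
    · right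
      refine Subtype.ext ((WithLp.ext_iff 2).2 (funext fun i => ?_))
      have hi : i = 0 := Fin.ext (Nat.lt_one_iff.1 i.isLt)
      rw [hi]
      show (y : Eu 1) 0 = (-(x : Eu 1)) 0
      simpa using h
  by_cases hneg : xneg ∈ S
  · have hSuniv : S = univ := eq_univ_of_forall fun y => by
      rcases hclass y with h | h
      · rw [h]; exact hx
      · rw [h]; exact hneg
    rw [hSuniv, univ_inter]
  · have hSx : S = {x} := by
      apply Subset.antisymm
      · intro y hy
        rcases hclass y with h | h
        · rw [h]; exact rfl
        · exact absurd (h ▸ hy) hneg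
      · intro y hy
        rw [mem_singleton_iff.1 hy]; exact hx
    have hxB : ({x} : Set (Sph 0)) ⊆ geoBall x r := by
      intro y hy
      rw [mem_singleton_iff.1 hy]
      exact self_mem_geoBall x hr
    rw [hSx, inter_eq_left.2 hxB, mul_comm]
    exact mul_le_mul' le_rfl (measure_mono (subset_univ _))

end BGaux

/-- Bishop–Gromov type inequality on the round sphere: for every open convex subset
`S ⊆ 𝕊^n` (i.e. the cone over `S` is convex in `ℝ^{n+1}`), every `x ∈ S` and `r > 0`,
`vol(S ∩ B(x,r))/vol(S) ≥ vol(B(x,r))/vol(𝕊^n)`. -/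
theorem bishop_gromov_sphere_convex
    (n : ℕ)
    (S : Set (sphere (0 : EuclideanSpace ℝ (Fin (n + 1))) 1))
    (hS_open : IsOpen S)
    (hS_conv : Convex ℝ {p : EuclideanSpace ℝ (Fin (n + 1)) |
      ∃ t : ℝ, 0 ≤ t ∧ ∃ s ∈ S, p = t • (s : EuclideanSpace ℝ (Fin (n + 1)))})
    (x : sphere (0 : EuclideanSpace ℝ (Fin (n + 1))) 1) (hx : x ∈ S)
    (r : ℝ) (hr : 0 < r) :
    sphereVolume n (geoBall x r) / sphereVolume n univ ≤
      sphereVolume n (S ∩ geoBall x r) / sphereVolume n S := by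
  classical
  have hfinInst : IsFiniteMeasure (sphereVolume n) := by
    unfold sphereVolume; infer_instance
  have hSmeas : MeasurableSet S := hS_open.measurableSet
  have hSne : sphereVolume n S ≠ 0 := by
    rw [BGaux.sphereVolume_eq S hSmeas]
    exact mul_ne_zero (by simp) (BGaux.volume_sec_pos hS_open ⟨x, hx⟩).ne'
  have hStop : sphereVolume n S ≠ ⊤ := measure_ne_top _ _
  have hUne : sphereVolume n univ ≠ 0 := by
    intro h
    exact hSne (measure_mono_null (subset_univ S) h)
  have hUtop : sphereVolume n univ ≠ ⊤ := measure_ne_top _ _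
  have hkey : sphereVolume n (geoBall x r) * sphereVolume n S ≤
      sphereVolume n (S ∩ geoBall x r) * sphereVolume n univ := by
    cases n with
    | zero => exact BGaux.key_zero S x hx hr
    | succ m => exact BGaux.key_succ S hS_open hS_conv x hx r
  rw [ENNReal.div_le_iff hUne hUtop]
  rw [show sphereVolume n (S ∩ geoBall x r) / sphereVolume n S * sphereVolume n univ
      = sphereVolume n (S ∩ geoBall x r) * sphereVolume n univ / sphereVolume n S by
    rw [div_eq_mul_inv, div_eq_mul_inv]; ring]
  rw [ENNReal.le_div_iff_mul_le (Or.inl hSne) (Or.inl hStop)]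
  exact hkey
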